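/- A periodic tiling exists for any convex pentagon of 'type 1', i.e., any convex pentagon whose angles satisfy D + E = π (two adjacent angles supplementary): such a pentagon tiles the plane periodically. Abstract version: if a convex pentagon ABCDE has D + E = π, then two copies (one rotated by π) fit together to form a hexagon with opposite sides parallel and equal, which tiles the plane by translations. -/

import Mathlib

open EuclideanGeometry Real Set

/-- A convex pentagon in the Euclidean plane: five vertices listed in
counterclockwise cyclic order, with a strict left turn at every vertex. -/
structure ConvexPentagon where
  v : Fin 5 → EuclideanSpace ℝ (Fin 2)
  convex : ∀ i : Fin 5,
    0 < (v (i + 1) - v i) 0 * (v (i + 2) - v (i + 1)) 1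
        - (v (i + 1) - v i) 1 * (v (i + 2) - v (i + 1)) 0

/-- The interior angle of a convex pentagon at vertex `i`. -/
noncomputable def ConvexPentagon.interiorAngle (P : ConvexPentagon) (i : Fin 5) : ℝ :=
  EuclideanGeometry.angle (P.v (i - 1)) (P.v i) (P.v (i + 1))

/-- The closed pentagonal region: the convex hull of the five vertices. -/
noncomputable def ConvexPentagon.region (P : ConvexPentagon) :
    Set (EuclideanSpace ℝ (Fin 2)) :=
  convexHull ℝ (Set.range P.v)

noncomputable section
namespace Type1Tiling

abbrev E2 : Type := EuclideanSpace ℝ (Fin 2)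

local notation "⟪" x ", " y "⟫_ℝ" => @inner ℝ E2 _ x y

def cross (x y : E2) : ℝ := x 0 * y 1 - x 1 * y 0

@[simp] lemma e2_sub_apply (x y : E2) (i : Fin 2) : (x - y) i = x i - y i := rfl
@[simp] lemma e2_add_apply (x y : E2) (i : Fin 2) : (x + y) i = x i + y i := rfl
@[simp] lemma e2_neg_apply (x : E2) (i : Fin 2) : (-x) i = -(x i) := rfl
@[simp] lemma e2_smul_apply (c : ℝ) (x : E2) (i : Fin 2) : (c • x) i = c * x i := rfl
@[simp] lemma e2_zero_apply (i : Fin 2) : (0 : E2) i = 0 := rfl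

lemma e2_ext {x y : E2} (h0 : x 0 = y 0) (h1 : x 1 = y 1) : x = y := by
  ext i; fin_cases i <;> assumption

@[simp] lemma cross_zero_left (y : E2) : cross 0 y = 0 := by simp [cross]
@[simp] lemma cross_zero_right (x : E2) : cross x 0 = 0 := by simp [cross]
lemma cross_add_right (w x y : E2) : cross w (x + y) = cross w x + cross w y := by
  simp [cross]; ring
lemma cross_sub_right (w x y : E2) : cross w (x - y) = cross w x - cross w y := by
  simp [cross]; ring
lemma cross_smul_right (c : ℝ) (x y : E2) : cross x (c • y) = c * cross x y := by
  simp [cross]; ring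
lemma cross_add_left (x y w : E2) : cross (x + y) w = cross x w + cross y w := by
  simp [cross]; ring
lemma cross_sub_left (x y w : E2) : cross (x - y) w = cross x w - cross y w := by
  simp [cross]; ring
lemma cross_smul_left (c : ℝ) (x w : E2) : cross (c • x) w = c * cross x w := by
  simp [cross]; ring
lemma cross_neg_left (x w : E2) : cross (-x) w = -cross x w := by simp [cross]; ring
lemma cross_self (x : E2) : cross x x = 0 := by simp [cross]; ring

lemma e2_inner (x y : E2) : ⟪x, y⟫_ℝ = x 0 * y 0 + x 1 * y 1 := by
  simp [PiLp.inner_apply, Fin.sum_univ_two]; ring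

lemma e2_nonzero {x : E2} (hx : x ≠ 0) : x 0 ^ 2 + x 1 ^ 2 > 0 := by
  rcases eq_or_ne (x 0) 0 with h0 | h0
  · rcases eq_or_ne (x 1) 0 with h1 | h1
    · exact absurd (e2_ext (by simp [h0]) (by simp [h1])) hx
    · positivity
  · positivity

lemma eq_of_cross_eq {w1 w2 z z' : E2} (h12 : cross w1 w2 ≠ 0)
    (h1 : cross w1 z = cross w1 z') (h2 : cross w2 z = cross w2 z') : z = z' := by
  have key0 : cross w1 w2 * (z 0 - z' 0)
      = (cross w1 z - cross w1 z') * w2 0 - (cross w2 z - cross w2 z') * w1 0 := by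
    simp only [cross]; ring
  have key1 : cross w1 w2 * (z 1 - z' 1)
      = (cross w1 z - cross w1 z') * w2 1 - (cross w2 z - cross w2 z') * w1 1 := by
    simp only [cross]; ring
  rw [h1, h2] at key0 key1
  simp only [sub_self, zero_mul, sub_zero, zero_sub, neg_zero] at key0 key1
  have k0 := (mul_eq_zero.mp key0).resolve_left h12
  have k1 := (mul_eq_zero.mp key1).resolve_left h12
  exact e2_ext (by linarith) (by linarith)

lemma eq_zero_of_inner_cross {x z : E2} (hx : x ≠ 0) (h1 : ⟪x,z⟫_ℝ = 0)
    (h2 : cross x z = 0) : z = 0 := by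
  rw [e2_inner] at h1
  simp only [cross] at h2
  have hx2 := e2_nonzero hx
  have k0 : z 0 * (x 0 ^ 2 + x 1 ^ 2) = x 0 * (x 0 * z 0 + x 1 * z 1)
      - x 1 * (x 0 * z 1 - x 1 * z 0) := by ring
  have k1 : z 1 * (x 0 ^ 2 + x 1 ^ 2) = x 1 * (x 0 * z 0 + x 1 * z 1)
      + x 0 * (x 0 * z 1 - x 1 * z 0) := by ring
  rw [h1, h2] at k0 k1
  simp only [mul_zero, sub_zero, add_zero, zero_sub, neg_zero, zero_add] at k0 k1
  have hz0 : z 0 = 0 := by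
    rcases mul_eq_zero.mp k0 with h | h
    · exact h
    · linarith
  have hz1 : z 1 = 0 := by
    rcases mul_eq_zero.mp k1 with h | h
    · exact h
    · linarith
  exact e2_ext (by simpa using hz0) (by simpa using hz1)

lemma cross_sq_add_inner_sq (x y : E2) :
    cross x y ^ 2 + ⟪x,y⟫_ℝ ^ 2 = (‖x‖ * ‖y‖) ^ 2 := by
  have hx : ‖x‖ ^ 2 = ⟪x,x⟫_ℝ := (real_inner_self_eq_norm_sq x).symm
  have hy : ‖y‖ ^ 2 = ⟪y,y⟫_ℝ := (real_inner_self_eq_norm_sq y).symm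
  have h : (‖x‖ * ‖y‖) ^ 2 = ‖x‖^2 * ‖y‖^2 := by ring
  rw [h, hx, hy, e2_inner, e2_inner, e2_inner, cross]; ring

/-- A vector `g` with `cross W g = W 0 ^2 + W 1 ^2`. -/
def perp (W : E2) : E2 := (WithLp.equiv 2 (Fin 2 → ℝ)).symm ![-(W 1), W 0]

@[simp] lemma perp_apply_0 (W : E2) : perp W 0 = -(W 1) := rfl
@[simp] lemma perp_apply_1 (W : E2) : perp W 1 = W 0 := rfl

lemma cross_perp (W : E2) : cross W (perp W) = W 0 ^ 2 + W 1 ^ 2 := by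
  simp [cross]; ring

lemma interior_cross_lt {W : E2} (hW : W ≠ 0) {r : ℝ} {S : Set E2}
    (hS : ∀ y ∈ S, cross W y ≤ r) {x : E2} (hx : x ∈ interior S) : cross W x < r := by
  have hle : cross W x ≤ r := hS x (interior_subset hx)
  rcases lt_or_eq_of_le hle with h | h
  · exact h
  exfalso
  obtain ⟨ε, hε, hball⟩ := Metric.isOpen_iff.mp isOpen_interior x hx
  have hWg : 0 < cross W (perp W) := by rw [cross_perp]; exact e2_nonzero hW
  set g := perp W with hg
  have hgnorm : 0 < ‖g‖ + 1 := by positivity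
  set δ : ℝ := ε / (2 * (‖g‖ + 1)) with hδ
  have hδpos : 0 < δ := by positivity
  have hmem : x + δ • g ∈ S := by
    apply interior_subset
    apply hball
    rw [Metric.mem_ball, dist_comm, dist_self_add_right, norm_smul]
    calc ‖(δ:ℝ)‖ * ‖g‖ = δ * ‖g‖ := by rw [Real.norm_eq_abs, abs_of_pos hδpos]
      _ ≤ δ * (‖g‖ + 1) := by nlinarith [norm_nonneg g]
      _ = ε / 2 := by rw [hδ]; field_simp
      _ < ε := by linarith
  have hval : cross W (x + δ • g) = cross W x + δ * cross W g := by
    simp only [cross, e2_add_apply, e2_smul_apply]; ring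
  have := hS _ hmem
  rw [hval, h] at this
  nlinarith

set_option maxHeartbeats 1000000 in
lemma parallel_of_angles {A C D E : E2}
    (hang : InnerProductGeometry.angle (C - D) (E - D)
          + InnerProductGeometry.angle (D - E) (A - E) = π)
    (hc2 : 0 < cross (D - C) (E - D)) (hc3 : 0 < cross (E - D) (A - E)) :
    ∃ t : ℝ, 0 < t ∧ A - E = t • (C - D) := by
  set w1 : E2 := C - D with hw1def
  set u : E2 := E - D with hudef
  set w2 : E2 := A - E with hw2def
  have s1 : 0 < cross u w1 := by
    have h : cross u w1 = cross (D-C) (E-D) := by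
      rw [hw1def, hudef]; simp only [cross, e2_sub_apply]; ring
    rw [h]; exact hc2
  have s2 : 0 < cross u w2 := hc3
  have hu : u ≠ 0 := by
    intro h; rw [h] at s1; simp [cross] at s1
  have hw1 : w1 ≠ 0 := by
    intro h; rw [h] at s1; simp [cross] at s1
  have hw2 : w2 ≠ 0 := by
    intro h; rw [h] at s2; simp [cross] at s2
  have hn1 : 0 < ‖w1‖ := norm_pos_iff.mpr hw1
  have hn2 : 0 < ‖u‖ := norm_pos_iff.mpr hu
  have hn3 : 0 < ‖w2‖ := norm_pos_iff.mpr hw2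
  have hDE : D - E = -u := by rw [hudef]; abel
  have hθ2 : InnerProductGeometry.angle (-u) w2 = π - InnerProductGeometry.angle w1 u := by
    rw [← hDE]; linarith
  have heq := congrArg Real.cos hθ2
  rw [Real.cos_pi_sub, InnerProductGeometry.cos_angle, InnerProductGeometry.cos_angle,
    inner_neg_left, norm_neg] at heq
  have E1 : ⟪u,w2⟫_ℝ * ‖w1‖ = ⟪u,w1⟫_ℝ * ‖w2‖ := by
    rw [← real_inner_comm w1 u] at heq
    have hdiv : ⟪u,w2⟫_ℝ/(‖u‖*‖w2‖) = ⟪u,w1⟫_ℝ/(‖w1‖*‖u‖) := by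
      have h1 : -(⟪u,w2⟫_ℝ/(‖u‖*‖w2‖)) = -(⟪u,w1⟫_ℝ/(‖w1‖*‖u‖)) := by
        rw [← neg_div]; exact heq
      exact neg_inj.mp h1
    rw [div_eq_div_iff (by positivity) (by positivity)] at hdiv
    have h2 : (⟪u,w2⟫_ℝ * ‖w1‖) * ‖u‖ = (⟪u,w1⟫_ℝ * ‖w2‖) * ‖u‖ := by linarith
    exact mul_right_cancel₀ hn2.ne' h2
  have c1 := cross_sq_add_inner_sq u w1
  have c2 := cross_sq_add_inner_sq u w2
  have hsq : (cross u w2 * ‖w1‖)^2 = (cross u w1 * ‖w2‖)^2 := by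
    linear_combination ‖w1‖^2 * c2 - ‖w2‖^2 * c1
      - ((inner ℝ u w2 : ℝ) * ‖w1‖ + (inner ℝ u w1 : ℝ) * ‖w2‖) * E1
  have E2' : cross u w2 * ‖w1‖ = cross u w1 * ‖w2‖ := by
    nlinarith [hsq, mul_pos s2 hn1, mul_pos s1 hn3]
  set z : E2 := ‖w1‖ • w2 - ‖w2‖ • w1 with hz
  have hiz : ⟪u,z⟫_ℝ = 0 := by
    rw [hz, inner_sub_right, real_inner_smul_right, real_inner_smul_right]
    nlinarith [E1]
  have hcz : cross u z = 0 := by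
    have h : cross u z = ‖w1‖ * cross u w2 - ‖w2‖ * cross u w1 := by
      rw [hz]; simp only [cross, e2_sub_apply, PiLp.smul_apply, smul_eq_mul]; ring
    rw [h]; nlinarith [E2']
  have hz0 : z = 0 := eq_zero_of_inner_cross hu hiz hcz
  refine ⟨‖w2‖/‖w1‖, div_pos hn3 hn1, ?_⟩
  have hzz : ‖w1‖ • w2 = ‖w2‖ • w1 := by
    have := sub_eq_zero.mp (hz ▸ hz0)
    exact this
  apply e2_ext
  · have h0 : ‖w1‖ * w2 0 = ‖w2‖ * w1 0 := by
      have := congrFun (congrArg (fun (v : E2) => (v : Fin 2 → ℝ)) hzz) 0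
      simpa using this
    show w2 0 = (‖w2‖/‖w1‖) * w1 0
    field_simp
    linarith [h0]
  · have h1 : ‖w1‖ * w2 1 = ‖w2‖ * w1 1 := by
      have := congrFun (congrArg (fun (v : E2) => (v : Fin 2 → ℝ)) hzz) 1
      simpa using this
    show w2 1 = (‖w2‖/‖w1‖) * w1 1
    field_simp
    linarith [h1]

def InHex (P Q R u v : ℝ) : Prop :=
  0 ≤ u ∧ u ≤ P + Q ∧ -P ≤ v ∧ v ≤ R ∧ 0 ≤ R*u - Q*v ∧ R*u - Q*v ≤ P*(Q+R)

def InHexO (P Q R u v : ℝ) : Prop :=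
  0 < u ∧ u < P + Q ∧ -P < v ∧ v < R ∧ 0 < R*u - Q*v ∧ R*u - Q*v < P*(Q+R)

lemma lattice_disjoint {P Q R : ℝ} (hP : 0 < P) (hQ : 0 < Q) (hR : 0 < R)
    {u v : ℝ} {m n : ℤ} (h1 : InHexO P Q R u v)
    (h2 : InHexO P Q R (u - ((m:ℝ)*(P+Q)+(n:ℝ)*Q)) (v - ((m:ℝ)*R+(n:ℝ)*(R+P)))) :
    m = 0 ∧ n = 0 := by
  obtain ⟨hu1, hu2, hv1, hv2, hw1, hw2⟩ := h1
  obtain ⟨hu1', hu2', hv1', hv2', hw1', hw2'⟩ := h2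
  have hA1 : -(P+Q) < (m:ℝ)*(P+Q)+(n:ℝ)*Q := by linarith
  have hA2 : (m:ℝ)*(P+Q)+(n:ℝ)*Q < P+Q := by linarith
  have hB1 : -(R+P) < (m:ℝ)*R+(n:ℝ)*(R+P) := by linarith
  have hB2 : (m:ℝ)*R+(n:ℝ)*(R+P) < R+P := by linarith
  have key : R*(u - ((m:ℝ)*(P+Q)+(n:ℝ)*Q)) - Q*(v - ((m:ℝ)*R+(n:ℝ)*(R+P)))
      = (R*u - Q*v) - P*((m:ℝ)*R-(n:ℝ)*Q) := by ring
  have hC1 : -(P*(Q+R)) < P*((m:ℝ)*R-(n:ℝ)*Q) := by rw [key] at hw2'; linarith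
  have hC2 : P*((m:ℝ)*R-(n:ℝ)*Q) < P*(Q+R) := by rw [key] at hw1'; linarith
  have hC1' : -(Q+R) < (m:ℝ)*R-(n:ℝ)*Q := by nlinarith
  have hC2' : (m:ℝ)*R-(n:ℝ)*Q < Q+R := (mul_lt_mul_iff_right₀ hP).mp hC2
  clear hu1 hu2 hv1 hv2 hw1 hw2 hu1' hu2' hv1' hv2' hw1' hw2' key hC1 hC2
  rcases lt_trichotomy m 0 with hm|hm|hm <;> rcases lt_trichotomy n 0 with hn|hn|hn
  · exfalso
    have hm' : (m:ℝ) ≤ -1 := by exact_mod_cast Int.le_sub_one_of_lt hm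
    have hn' : (n:ℝ) ≤ -1 := by exact_mod_cast Int.le_sub_one_of_lt hn
    nlinarith [mul_le_mul_of_nonneg_right hm' hR.le,
      mul_le_mul_of_nonneg_right hn' (by linarith : (0:ℝ) ≤ R+P)]
  · exfalso
    have hm' : (m:ℝ) ≤ -1 := by exact_mod_cast Int.le_sub_one_of_lt hm
    have hn' : (n:ℝ) = 0 := by exact_mod_cast hn
    rw [hn'] at hA1
    nlinarith [mul_le_mul_of_nonneg_right hm' (by linarith : (0:ℝ) ≤ P+Q)]
  · exfalso
    have hm' : (m:ℝ) ≤ -1 := by exact_mod_cast Int.le_sub_one_of_lt hm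
    have hn' : (1:ℝ) ≤ (n:ℝ) := by exact_mod_cast hn
    nlinarith [mul_le_mul_of_nonneg_right hm' hR.le,
      mul_le_mul_of_nonneg_right hn' hQ.le]
  · exfalso
    have hm' : (m:ℝ) = 0 := by exact_mod_cast hm
    have hn' : (n:ℝ) ≤ -1 := by exact_mod_cast Int.le_sub_one_of_lt hn
    rw [hm'] at hB1
    nlinarith [mul_le_mul_of_nonneg_right hn' (by linarith : (0:ℝ) ≤ R+P)]
  · exact ⟨hm, hn⟩
  · exfalso
    have hm' : (m:ℝ) = 0 := by exact_mod_cast hm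
    have hn' : (1:ℝ) ≤ (n:ℝ) := by exact_mod_cast hn
    rw [hm'] at hB2
    nlinarith [mul_le_mul_of_nonneg_right hn' (by linarith : (0:ℝ) ≤ R+P)]
  · exfalso
    have hm' : (1:ℝ) ≤ (m:ℝ) := by exact_mod_cast hm
    have hn' : (n:ℝ) ≤ -1 := by exact_mod_cast Int.le_sub_one_of_lt hn
    nlinarith [mul_le_mul_of_nonneg_right hm' hR.le,
      mul_le_mul_of_nonneg_right hn' hQ.le]
  · exfalso
    have hm' : (1:ℝ) ≤ (m:ℝ) := by exact_mod_cast hm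
    have hn' : (n:ℝ) = 0 := by exact_mod_cast hn
    rw [hn'] at hA2
    nlinarith [mul_le_mul_of_nonneg_right hm' (by linarith : (0:ℝ) ≤ P+Q)]
  · exfalso
    have hm' : (1:ℝ) ≤ (m:ℝ) := by exact_mod_cast hm
    have hn' : (1:ℝ) ≤ (n:ℝ) := by exact_mod_cast hn
    nlinarith [mul_le_mul_of_nonneg_right hm' hR.le,
      mul_le_mul_of_nonneg_right hn' (by linarith : (0:ℝ) ≤ R+P)]


set_option maxHeartbeats 1000000 in
lemma lattice_cover {P Q R : ℝ} (hP : 0 < P) (hQ : 0 < Q) (hR : 0 < R) (u v : ℝ) :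
    ∃ m n : ℤ, InHex P Q R (u - ((m:ℝ)*(P+Q)+(n:ℝ)*Q)) (v - ((m:ℝ)*R+(n:ℝ)*(R+P))) := by
  have hRQ : (0:ℝ) < R + Q := by linarith
  set T : ℝ := P + Q + R with hT
  have hTpos : 0 < T := by rw [hT]; linarith
  set k : ℤ := ⌊(u+v)/T⌋ with hk
  set h₀ : ℝ := u + v - k*T with hh₀
  have hkT : (k:ℝ)*T ≤ u+v := by
    have h := Int.floor_le ((u+v)/T)
    have h2 := mul_le_mul_of_nonneg_right h hTpos.le
    rw [div_mul_cancel₀ _ hTpos.ne'] at h2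
    rw [hk]; exact h2
  have hkT2 : u+v < (k:ℝ)*T + T := by
    have h := Int.lt_floor_add_one ((u+v)/T)
    have h2 := mul_lt_mul_of_pos_right h hTpos
    rw [div_mul_cancel₀ _ hTpos.ne'] at h2
    rw [hk]; push_cast at h2 ⊢; linarith
  have hh1 : 0 ≤ h₀ := by rw [hh₀]; linarith
  have hh2 : h₀ < T := by rw [hh₀]; linarith
  clear_value T k h₀
  clear hkT hkT2
  rcases le_or_gt h₀ (Q+R) with hcase | hcase
  · -- middle band
    set L : ℝ := R*h₀ - P*(Q+R) with hL
    set j : ℤ := ⌈(L - (v-k*R)*(R+Q))/(P*(R+Q))⌉ with hj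
    have hPRQ : 0 < P*(R+Q) := by positivity
    have hjc1 : (L - (v-k*R)*(R+Q))/(P*(R+Q)) ≤ (j:ℝ) := by rw [hj]; exact Int.le_ceil _
    have hjc2 : (j:ℝ) < (L - (v-k*R)*(R+Q))/(P*(R+Q)) + 1 := by
      rw [hj]; exact Int.ceil_lt_add_one _
    have hj1 : L - (v-k*R)*(R+Q) ≤ (j:ℝ)*(P*(R+Q)) := by
      have h2 := mul_le_mul_of_nonneg_right hjc1 hPRQ.le
      rwa [div_mul_cancel₀ _ hPRQ.ne'] at h2
    have hj2 : (j:ℝ)*(P*(R+Q)) < L - (v-k*R)*(R+Q) + P*(R+Q) := by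
      have h2 := mul_lt_mul_of_pos_right hjc2 hPRQ
      rw [add_mul, div_mul_cancel₀ _ hPRQ.ne', one_mul] at h2
      exact h2
    clear_value j L
    clear hjc1 hjc2
    set v' : ℝ := v - k*R + j*P with hv'
    have hs1 : L ≤ v'*(R+Q) := by rw [hv']; nlinarith
    have hs2 : v'*(R+Q) < L + P*(R+Q) := by rw [hv']; nlinarith
    have key1 : v'*(R+Q) < R*h₀ := by rw [hL] at hs2; linarith
    have key2 : R*h₀ - P*(Q+R) ≤ v'*(R+Q) := by rw [hL] at hs1; linarith
    refine ⟨k+j, -j, ?_⟩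
    have hu' : u - (((k+j:ℤ):ℝ)*(P+Q)+((-j:ℤ):ℝ)*Q) = h₀ - v' := by
      push_cast; rw [hh₀, hv', hT]; ring
    have hv'' : v - (((k+j:ℤ):ℝ)*R+((-j:ℤ):ℝ)*(R+P)) = v' := by
      push_cast; rw [hv']; ring
    rw [hu', hv'']
    clear_value v'
    clear hs1 hs2 hj1 hj2
    refine ⟨?_, ?_, ?_, ?_, ?_, ?_⟩
    · nlinarith [mul_nonneg hQ.le hh1]
    · nlinarith [mul_le_mul_of_nonneg_left hcase hQ.le]
    · nlinarith [mul_nonneg hR.le hh1]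
    · nlinarith [mul_le_mul_of_nonneg_left hcase hR.le]
    · nlinarith
    · nlinarith
  · -- upper band h₀ ∈ (Q+R, T)
    set j : ℤ := ⌈((h₀-P-Q) - (v-k*R))/P⌉ with hj
    have hjc1 : ((h₀-P-Q) - (v-k*R))/P ≤ (j:ℝ) := by rw [hj]; exact Int.le_ceil _
    have hjc2 : (j:ℝ) < ((h₀-P-Q) - (v-k*R))/P + 1 := by
      rw [hj]; exact Int.ceil_lt_add_one _
    have hj1 : (h₀-P-Q) - (v-k*R) ≤ (j:ℝ)*P := by
      have h2 := mul_le_mul_of_nonneg_right hjc1 hP.le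
      rwa [div_mul_cancel₀ _ hP.ne'] at h2
    have hj2 : (j:ℝ)*P < (h₀-P-Q) - (v-k*R) + P := by
      have h2 := mul_lt_mul_of_pos_right hjc2 hP
      rw [add_mul, div_mul_cancel₀ _ hP.ne', one_mul] at h2
      exact h2
    clear_value j
    clear hjc1 hjc2
    set v' : ℝ := v - k*R + j*P with hv'
    have hs1 : h₀-P-Q ≤ v' := by rw [hv']; linarith
    have hs2 : v' < h₀-Q := by rw [hv']; linarith
    rcases le_or_gt v' R with hsub | hsub
    · refine ⟨k+j, -j, ?_⟩
      have hu' : u - (((k+j:ℤ):ℝ)*(P+Q)+((-j:ℤ):ℝ)*Q) = h₀ - v' := by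
        push_cast; rw [hh₀, hv', hT]; ring
      have hv'' : v - (((k+j:ℤ):ℝ)*R+((-j:ℤ):ℝ)*(R+P)) = v' := by
        push_cast; rw [hv']; ring
      rw [hu', hv'']
      clear_value v'
      clear hj1 hj2
      refine ⟨?_, ?_, ?_, ?_, ?_, ?_⟩
      · linarith
      · linarith
      · linarith
      · linarith
      · nlinarith [mul_le_mul_of_nonneg_left hsub hRQ.le,
          mul_le_mul_of_nonneg_left hcase.le hR.le]
      · nlinarith [mul_le_mul_of_nonneg_left hs1 hRQ.le,
          mul_le_mul_of_nonneg_left hcase.le hQ.le]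
    · refine ⟨k+j, 1-j, ?_⟩
      have hu' : u - (((k+j:ℤ):ℝ)*(P+Q)+((1-j:ℤ):ℝ)*Q) = (h₀-T) - (v'-R-P) := by
        push_cast; rw [hh₀, hv', hT]; ring
      have hv'' : v - (((k+j:ℤ):ℝ)*R+((1-j:ℤ):ℝ)*(R+P)) = v'-R-P := by
        push_cast; rw [hv']; ring
      rw [hu', hv'']
      set v₁ : ℝ := v' - R - P with hv₁
      set h₁ : ℝ := h₀ - T with hh₁
      have hb1 : -P < v₁ := by rw [hv₁]; linarith
      have hb2 : v₁ < h₁ := by rw [hv₁, hh₁, hT]; linarith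
      have hb3 : h₁ < 0 := by rw [hh₁]; linarith
      have hb4 : -P < h₁ := by rw [hh₁, hT]; linarith
      clear_value v₁ h₁
      clear hs1 hs2 hj1 hj2 hsub hcase hh1 hh2 hu' hv'' 
      refine ⟨?_, ?_, ?_, ?_, ?_, ?_⟩
      · linarith
      · linarith
      · linarith
      · linarith
      · linarith [mul_le_mul_of_nonneg_left hb2.le hRQ.le,
          mul_nonpos_of_nonneg_of_nonpos hQ.le hb3.le]
      · linarith [mul_le_mul_of_nonneg_left hb1.le hRQ.le,
          mul_nonpos_of_nonneg_of_nonpos hR.le hb3.le]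


set_option maxHeartbeats 1000000 in
lemma hex_to_pentagon {P Q R μ ν : ℝ} (hP : 0 < P) (hQ : 0 < Q) (hR : 0 < R)
    (hμ : 0 < μ) (hν : 0 < ν) (hμν : μ + ν = 1)
    {u v : ℝ} (h : InHex P Q R u v)
    (hell : P*(u+v) ≤ ν*P*(Q+R) + (μ-ν)*(R*u-Q*v)) :
    ∃ lA lB lC lD lE : ℝ, 0 ≤ lA ∧ 0 ≤ lB ∧ 0 ≤ lC ∧ 0 ≤ lD ∧ 0 ≤ lE ∧
      lA+lB+lC+lD+lE = 1 ∧
      u = P*lC + (P+μ*Q)*lD + ν*Q*lE ∧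
      v = -P*lB - P*lC + (-P+μ*R)*lD + ν*R*lE := by
  obtain ⟨hu1, hu2, hv1, hv2, hw1, hw2⟩ := h
  have hRQ : (0:ℝ) < R + Q := by linarith
  have hD : (0:ℝ) < P + μ*Q + ν*R := by positivity
  set c : ℝ := min (u/Q) (min ((P+v)/R) ((ν*P+μ*u+ν*v)/(P+μ*Q+ν*R))) with hc
  have hc0 : 0 ≤ c := by
    refine le_min (by positivity) (le_min ?_ ?_)
    · exact div_nonneg (by linarith) hR.le
    · exact div_nonneg (by nlinarith) hD.le
  have hc_le1 : c*Q ≤ u := by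
    have := min_le_left (u/Q) (min ((P+v)/R) ((ν*P+μ*u+ν*v)/(P+μ*Q+ν*R)))
    rw [← hc] at this
    calc c*Q ≤ (u/Q)*Q := mul_le_mul_of_nonneg_right this hQ.le
      _ = u := by field_simp
  have hc_le2 : c*R ≤ P+v := by
    have h1 := (min_le_right (u/Q) (min ((P+v)/R) ((ν*P+μ*u+ν*v)/(P+μ*Q+ν*R)))).trans
      (min_le_left _ _)
    rw [← hc] at h1
    calc c*R ≤ ((P+v)/R)*R := mul_le_mul_of_nonneg_right h1 hR.le
      _ = P+v := by field_simp
  have hc_le3 : c*(P+μ*Q+ν*R) ≤ ν*P+μ*u+ν*v := by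
    have h1 := (min_le_right (u/Q) (min ((P+v)/R) ((ν*P+μ*u+ν*v)/(P+μ*Q+ν*R)))).trans
      (min_le_right _ _)
    rw [← hc] at h1
    calc c*(P+μ*Q+ν*R) ≤ ((ν*P+μ*u+ν*v)/(P+μ*Q+ν*R))*(P+μ*Q+ν*R) :=
          mul_le_mul_of_nonneg_right h1 hD.le
      _ = ν*P+μ*u+ν*v := by field_simp
  have hc_ge : u+v ≤ c*(Q+R) := by
    have k1 : (u+v)/(Q+R) ≤ u/Q := by
      rw [div_le_div_iff₀ (by linarith) hQ]; nlinarith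
    have k2 : (u+v)/(Q+R) ≤ (P+v)/R := by
      rw [div_le_div_iff₀ (by linarith) hR]; nlinarith
    have k3 : (u+v)/(Q+R) ≤ (ν*P+μ*u+ν*v)/(P+μ*Q+ν*R) := by
      rw [div_le_div_iff₀ (by linarith) hD]; nlinarith
    have : (u+v)/(Q+R) ≤ c := by rw [hc]; exact le_min k1 (le_min k2 k3)
    calc u+v = ((u+v)/(Q+R))*(Q+R) := by field_simp
      _ ≤ c*(Q+R) := mul_le_mul_of_nonneg_right this (by linarith)
  clear_value c
  set a : ℝ := (c*R-v)/P with ha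
  set b : ℝ := (u-c*Q)/P with hb
  have hPa : P*a = c*R-v := by rw [ha]; field_simp
  have hPb : P*b = u-c*Q := by rw [hb]; field_simp
  clear_value a b
  have hb0 : 0 ≤ b := by nlinarith
  have hab : b ≤ a := by nlinarith
  have ha1 : a ≤ 1 := by nlinarith
  set lD : ℝ := min b (c/μ) with hlD
  have hlD0 : 0 ≤ lD := le_min hb0 (div_nonneg hc0 hμ.le)
  have hμlD : μ*lD ≤ c := by
    have h1 : lD ≤ c/μ := min_le_right _ _
    calc μ*lD ≤ μ*(c/μ) := mul_le_mul_of_nonneg_left h1 hμ.le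
      _ = c := by field_simp
  clear_value lD
  set lE : ℝ := (c-μ*lD)/ν with hlE
  have hlE0 : 0 ≤ lE := div_nonneg (by linarith) hν.le
  have hνlE : ν*lE = c-μ*lD := by rw [hlE]; field_simp
  clear_value lE
  have hlA0 : 0 ≤ 1 - a - lE := by
    rcases le_total b (c/μ) with hmin|hmin
    · have hlDb : lD = b := hlD.trans (min_eq_left hmin)
      have hνlE' : ν*lE = c-μ*b := by rw [hνlE, hlDb]
      have key : P*(ν*(1-a-lE)) = (ν*P+μ*u+ν*v) - c*(P+μ*Q+ν*R) := by
        linear_combination (-ν)*hPa + (-P)*hνlE' + μ*hPb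
      nlinarith [key, hc_le3, mul_pos hP hν]
    · have hlDc : lD = c/μ := hlD.trans (min_eq_right hmin)
      have : μ*lD = c := by rw [hlDc]; field_simp
      have hlE0' : lE = 0 := by
        rw [hlE, this]; simp
      rw [hlE0']; linarith
  refine ⟨1-a-lE, a-b, b-lD, lD, lE, hlA0, by linarith, by linarith [min_le_left b (c/μ)],
    hlD0, hlE0, by ring, ?_, ?_⟩
  · linear_combination (-1)*hPb + (-Q)*hνlE
  · linear_combination hPa - R*hνlE

lemma inhex_convex {P Q R u1 v1 u2 v2 a b : ℝ} (h1 : InHex P Q R u1 v1)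
    (h2 : InHex P Q R u2 v2) (ha : 0 ≤ a) (hb : 0 ≤ b) (hab : a + b = 1) :
    InHex P Q R (a*u1+b*u2) (a*v1+b*v2) := by
  obtain ⟨k1, k2, k3, k4, k5, k6⟩ := h1
  obtain ⟨l1, l2, l3, l4, l5, l6⟩ := h2
  refine ⟨add_nonneg (mul_nonneg ha k1) (mul_nonneg hb l1), ?_, ?_, ?_,
    add_nonneg (mul_nonneg ha k5) (mul_nonneg hb l5) |>.trans (le_of_eq (by ring)), ?_⟩
  · nlinarith [mul_le_mul_of_nonneg_left k2 ha, mul_le_mul_of_nonneg_left l2 hb]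
  · have eP : a*P + b*P = P := by rw [← add_mul, hab, one_mul]
    nlinarith [mul_le_mul_of_nonneg_left k3 ha, mul_le_mul_of_nonneg_left l3 hb, eP]
  · have eR : a*R + b*R = R := by rw [← add_mul, hab, one_mul]
    nlinarith [mul_le_mul_of_nonneg_left k4 ha, mul_le_mul_of_nonneg_left l4 hb, eR]
  · nlinarith [mul_le_mul_of_nonneg_left k6 ha, mul_le_mul_of_nonneg_left l6 hb]

lemma inhex_A {P Q R : ℝ} (hP : 0 < P) (hQ : 0 < Q) (hR : 0 < R) :
    InHex P Q R 0 0 := by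
  refine ⟨le_refl _, by linarith, by linarith, by linarith, by nlinarith, by nlinarith⟩

lemma inhex_B {P Q R : ℝ} (hP : 0 < P) (hQ : 0 < Q) (hR : 0 < R) :
    InHex P Q R 0 (-P) := by
  refine ⟨le_refl _, by linarith, by linarith, by linarith, by nlinarith, by nlinarith⟩

lemma inhex_C {P Q R : ℝ} (hP : 0 < P) (hQ : 0 < Q) (hR : 0 < R) :
    InHex P Q R P (-P) := by
  refine ⟨by linarith, by linarith, by linarith, by linarith, by nlinarith, by nlinarith⟩

lemma inhex_D {P Q R μ : ℝ} (hP : 0 < P) (hQ : 0 < Q) (hR : 0 < R)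
    (hμ : 0 < μ) (hμ1 : μ ≤ 1) : InHex P Q R (P+μ*Q) (-P+μ*R) := by
  refine ⟨by nlinarith, by nlinarith, by nlinarith, by nlinarith, by nlinarith, by nlinarith⟩

lemma inhex_E {P Q R ν : ℝ} (hP : 0 < P) (hQ : 0 < Q) (hR : 0 < R)
    (hν : 0 < ν) (hν1 : ν ≤ 1) : InHex P Q R (ν*Q) (ν*R) := by
  refine ⟨by nlinarith, by nlinarith, by nlinarith, by nlinarith, by nlinarith, by nlinarith⟩

lemma inhex_sigma {P Q R u v : ℝ} (h : InHex P Q R u v) :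
    InHex P Q R ((P+Q)-u) ((R-P)-v) := by
  obtain ⟨k1, k2, k3, k4, k5, k6⟩ := h
  refine ⟨by linarith, by linarith, by linarith, by linarith, by nlinarith, by nlinarith⟩

lemma ell_sigma {P Q R μ ν u v : ℝ} (hμν : μ + ν = 1)
    (h : ν*P*(Q+R)+(μ-ν)*(R*u-Q*v) < P*(u+v)) :
    P*(((P+Q)-u)+((R-P)-v)) ≤ ν*P*(Q+R) + (μ-ν)*(R*((P+Q)-u) - Q*((R-P)-v)) := by
  have key : P*(((P+Q)-u)+((R-P)-v)) - (ν*P*(Q+R) + (μ-ν)*(R*((P+Q)-u) - Q*((R-P)-v)))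
      = -(P*(u+v) - (ν*P*(Q+R)+(μ-ν)*(R*u-Q*v))) := by
    linear_combination (-(P*Q+P*R)) * hμν
  nlinarith [key]

lemma wl_contra {P Q R μ ν : ℝ} (hP : 0 < P) (hQ : 0 < Q) (hR : 0 < R)
    (h4 : (μ-ν)*R = P) (h5 : (μ-ν)*Q = -P) : False := by
  have h6 : P*Q + P*R = 0 := by linear_combination R*h5 - Q*h4
  nlinarith [mul_pos hP hQ, mul_pos hP hR]

end Type1Tiling
end

open Type1Tiling

set_option maxHeartbeats 4000000

/-- Type 1 pentagons tile periodically: if the interior angles at the two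
adjacent vertices `D` (index 3) and `E` (index 4) of a convex pentagon are
supplementary, then the plane can be tiled by congruent (isometric) copies of
the pentagon, and the tiling is periodic, i.e. invariant under translations by
two linearly independent vectors. -/
theorem type1_pentagon_tiles_periodically
    (P : ConvexPentagon)
    (hDE : P.interiorAngle 3 + P.interiorAngle 4 = π) :
    ∃ S : Set (Set (EuclideanSpace ℝ (Fin 2))),
      (∀ T ∈ S, ∃ g : EuclideanSpace ℝ (Fin 2) ≃ᵢ EuclideanSpace ℝ (Fin 2),
        T = g '' P.region) ∧
      ⋃₀ S = Set.univ ∧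
      (∀ T₁ ∈ S, ∀ T₂ ∈ S, T₁ ≠ T₂ → Disjoint (interior T₁) (interior T₂)) ∧
      ∃ t₁ t₂ : EuclideanSpace ℝ (Fin 2),
        LinearIndependent ℝ ![t₁, t₂] ∧
        (∀ T ∈ S, (fun x => x + t₁) '' T ∈ S) ∧
        (∀ T ∈ S, (fun x => x + t₂) '' T ∈ S) := by
  classical
  obtain ⟨t, ht, hpar⟩ :
      ∃ t : ℝ, 0 < t ∧ P.v 0 - P.v 4 = t • (P.v 2 - P.v 3) := by
    apply Type1Tiling.parallel_of_angles
    · have h3 : P.interiorAngle 3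
          = InnerProductGeometry.angle (P.v 2 - P.v 3) (P.v 4 - P.v 3) := rfl
      have h4 : P.interiorAngle 4
          = InnerProductGeometry.angle (P.v 3 - P.v 4) (P.v 0 - P.v 4) := rfl
      rw [← h3, ← h4]; exact hDE
    · exact P.convex 2
    · exact P.convex 3
  have c0 : 0 < cross (P.v 1 - P.v 0) (P.v 2 - P.v 1) := P.convex 0
  have c1 : 0 < cross (P.v 2 - P.v 1) (P.v 3 - P.v 2) := P.convex 1
  have c2 : 0 < cross (P.v 3 - P.v 2) (P.v 4 - P.v 3) := P.convex 2
  have c3 : 0 < cross (P.v 4 - P.v 3) (P.v 0 - P.v 4) := P.convex 3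
  have c4 : 0 < cross (P.v 0 - P.v 4) (P.v 1 - P.v 0) := P.convex 4
  set A : E2 := P.v 0 with hA
  set B : E2 := P.v 1 with hBdef
  set C : E2 := P.v 2 with hCdef
  set D : E2 := P.v 3 with hDdef
  set E : E2 := P.v 4 with hEdef
  have h1t : (0:ℝ) < 1 + t := by linarith only [ht]
  set e1 : E2 := B - A with he1
  set e2 : E2 := C - B with he2
  set e3 : E2 := (1+t) • (D - C) with he3
  set Pp : ℝ := cross e1 e2 with hPpdef
  set Qq : ℝ := cross e1 e3 with hQqdef
  set Rr : ℝ := cross e2 e3 with hRrdef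
  set μ : ℝ := 1/(1+t) with hμdef
  set ν : ℝ := t/(1+t) with hνdef
  have hμ : 0 < μ := by rw [hμdef]; positivity
  have hν : 0 < ν := by rw [hνdef]; positivity
  have hμν : μ + ν = 1 := by rw [hμdef, hνdef]; field_simp
  have hp0 : A 0 - E 0 = t * (C 0 - D 0) := by
    have := congrFun (congrArg (fun (w : E2) => (w : Fin 2 → ℝ)) hpar) 0
    simpa using this
  have hp1 : A 1 - E 1 = t * (C 1 - D 1) := by
    have := congrFun (congrArg (fun (w : E2) => (w : Fin 2 → ℝ)) hpar) 1
    simpa using this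
  have hPp : 0 < Pp := c0
  have hkey4 : t * (cross (B - A) (D - C)) = cross (A - E) (B - A) := by
    simp only [cross, e2_sub_apply]
    linear_combination (-(B 1 - A 1))*hp0 + (B 0 - A 0)*hp1
  have hQq : 0 < Qq := by
    have hq : Qq = (1+t) * cross (B - A) (D - C) := by
      rw [hQqdef, he3, cross_smul_right]
    have h6 : 0 < cross (B - A) (D - C) := by nlinarith [hkey4, c4, ht]
    rw [hq]; exact mul_pos h1t h6
  have hRr : 0 < Rr := by
    have hq : Rr = (1+t) * cross (C - B) (D - C) := by
      rw [hRrdef, he3, cross_smul_right, he2]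
    rw [hq]; exact mul_pos h1t c1
  -- vertex difference representations
  have hdB : B - A = e1 := he1.symm
  have hdC : C - A = e1 + e2 := by rw [he1, he2]; abel
  have hdD : D - A = e1 + e2 + μ • e3 := by
    apply e2_ext <;>
      simp only [e2_sub_apply, e2_add_apply, e2_smul_apply, he1, he2, he3, hμdef] <;>
      field_simp <;> ring
  have hdE : E - A = ν • e3 := by
    apply e2_ext
    · simp only [e2_sub_apply, e2_smul_apply, he3, hνdef]
      field_simp
      linear_combination (-1)*hp0
    · simp only [e2_sub_apply, e2_smul_apply, he3, hνdef]
      field_simp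
      linear_combination (-1)*hp1
  have hce2e1 : cross e2 e1 = -Pp := by rw [hPpdef]; simp only [cross]; ring
  have hce3e1 : cross e3 e1 = -Qq := by rw [hQqdef]; simp only [cross]; ring
  clear_value A B C D E e1 e2 e3 Pp Qq Rr μ ν
  -- the two coordinate functionals
  set U : E2 → ℝ := fun y => cross e1 (y - A) with hUdef
  set V : E2 → ℝ := fun y => cross e2 (y - A) with hVdef
  have hUA : U A = 0 := by simp only [hUdef]; rw [sub_self, cross_zero_right]
  have hVA : V A = 0 := by simp only [hVdef]; rw [sub_self, cross_zero_right]
  have hUB : U B = 0 := by simp only [hUdef]; rw [hdB, Type1Tiling.cross_self]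
  have hVB : V B = -Pp := by simp only [hVdef]; rw [hdB, hce2e1]
  have hUC : U C = Pp := by
    simp only [hUdef]; rw [hdC, cross_add_right, Type1Tiling.cross_self, hPpdef]; ring
  have hVC : V C = -Pp := by
    simp only [hVdef]; rw [hdC, cross_add_right, Type1Tiling.cross_self, hce2e1]; ring
  have hUD : U D = Pp + μ*Qq := by
    simp only [hUdef]
    rw [hdD, cross_add_right, cross_add_right, cross_smul_right, Type1Tiling.cross_self, hPpdef, hQqdef]
    ring
  have hVD : V D = -Pp + μ*Rr := by
    simp only [hVdef]
    rw [hdD, cross_add_right, cross_add_right, cross_smul_right, Type1Tiling.cross_self, hce2e1, hRrdef]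
    ring
  have hUE : U E = ν*Qq := by
    simp only [hUdef]; rw [hdE, cross_smul_right, hQqdef]
  have hVE : V E = ν*Rr := by
    simp only [hVdef]; rw [hdE, cross_smul_right, hRrdef]
  -- affineness of U, V
  have haffU : ∀ (a b : ℝ) (x y : E2), a + b = 1 → U (a•x + b•y) = a * U x + b * U y := by
    intro a b x y hab
    simp only [hUdef, cross, e2_sub_apply, e2_add_apply, e2_smul_apply]
    linear_combination (A 1 * (e1 0) - A 0 * (e1 1)) * hab
  have haffV : ∀ (a b : ℝ) (x y : E2), a + b = 1 → V (a•x + b•y) = a * V x + b * V y := by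
    intro a b x y hab
    simp only [hVdef, cross, e2_sub_apply, e2_add_apply, e2_smul_apply]
    linear_combination (A 1 * (e2 0) - A 0 * (e2 1)) * hab
  -- the hexagonal slab region
  set Slab : Set E2 := {y | InHex Pp Qq Rr (U y) (V y)} with hSlabdef
  have hSlabConvex : Convex ℝ Slab := by
    intro x hx y hy a b ha hb hab
    simp only [hSlabdef, Set.mem_setOf_eq] at hx hy ⊢
    rw [haffU a b x y hab, haffV a b x y hab]
    exact inhex_convex hx hy ha hb hab
  have hμ1 : μ ≤ 1 := by linarith only [hμν, hν]
  have hν1 : ν ≤ 1 := by linarith only [hμν, hμ]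
  have hvertSlab : ∀ i : Fin 5, P.v i ∈ Slab := by
    have hmemA : A ∈ Slab := by
      simp only [hSlabdef, Set.mem_setOf_eq]
      rw [hUA, hVA]; exact inhex_A hPp hQq hRr
    have hmemB : B ∈ Slab := by
      simp only [hSlabdef, Set.mem_setOf_eq]
      rw [hUB, hVB]; exact inhex_B hPp hQq hRr
    have hmemC : C ∈ Slab := by
      simp only [hSlabdef, Set.mem_setOf_eq]
      rw [hUC, hVC]; exact inhex_C hPp hQq hRr
    have hmemD : D ∈ Slab := by
      simp only [hSlabdef, Set.mem_setOf_eq]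
      rw [hUD, hVD]; exact inhex_D hPp hQq hRr hμ hμ1
    have hmemE : E ∈ Slab := by
      simp only [hSlabdef, Set.mem_setOf_eq]
      rw [hUE, hVE]; exact inhex_E hPp hQq hRr hν hν1
    intro i; fin_cases i
    · exact hA ▸ hmemA
    · exact hBdef ▸ hmemB
    · exact hCdef ▸ hmemC
    · exact hDdef ▸ hmemD
    · exact hEdef ▸ hmemE
  have hPentSlab : P.region ⊆ Slab := by
    rw [ConvexPentagon.region]
    apply convexHull_min _ hSlabConvex
    rintro _ ⟨i, rfl⟩
    exact hvertSlab i
  -- the separating affine functional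
  set Lf : E2 → ℝ :=
    fun y => ν*Pp*(Qq+Rr) - Pp*(U y + V y) + (μ-ν)*(Rr*(U y) - Qq*(V y)) with hLfdef
  have haffL : ∀ (a b : ℝ) (x y : E2), a + b = 1 → Lf (a•x + b•y) = a * Lf x + b * Lf y := by
    intro a b x y hab
    simp only [hLfdef]
    rw [haffU a b x y hab, haffV a b x y hab]
    linear_combination (-(ν*Pp*(Qq+Rr))) * hab
  have hLfA : Lf A = ν*Pp*(Qq+Rr) := by simp only [hLfdef]; rw [hUA, hVA]; ring
  have hLfB : Lf B = Pp*(ν*Rr + Pp + μ*Qq) := by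
    simp only [hLfdef]; rw [hUB, hVB]; ring
  have hLfC : Lf C = μ*Pp*(Qq+Rr) := by
    simp only [hLfdef]; rw [hUC, hVC]; ring
  have hLfD : Lf D = 0 := by
    simp only [hLfdef]; rw [hUD, hVD]; ring
  have hLfE : Lf E = 0 := by
    simp only [hLfdef]; rw [hUE, hVE]; ring
  have hLConvex : Convex ℝ {y : E2 | 0 ≤ Lf y} := by
    intro x hx y hy a b ha hb hab
    simp only [Set.mem_setOf_eq] at hx hy ⊢
    rw [haffL a b x y hab]
    exact add_nonneg (mul_nonneg ha hx) (mul_nonneg hb hy)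
  have hPentL : P.region ⊆ {y : E2 | 0 ≤ Lf y} := by
    rw [ConvexPentagon.region]
    apply convexHull_min _ hLConvex
    rintro _ ⟨i, rfl⟩
    simp only [Set.mem_setOf_eq]
    fin_cases i
    · exact hA ▸ (show (0:ℝ) ≤ Lf A by rw [hLfA]; positivity)
    · exact hBdef ▸ (show (0:ℝ) ≤ Lf B by rw [hLfB]; positivity)
    · exact hCdef ▸ (show (0:ℝ) ≤ Lf C by rw [hLfC]; positivity)
    · exact hDdef ▸ (show (0:ℝ) ≤ Lf D by rw [hLfD])
    · exact hEdef ▸ (show (0:ℝ) ≤ Lf E by rw [hLfE])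
  -- central symmetry
  set σ : E2 → E2 := fun y => D + E - y with hσdef
  set pentR : Set E2 := σ '' P.region with hpentR
  have hUσ : ∀ y : E2, U (σ y) = (Pp + Qq) - U y := by
    intro y
    have hrw : σ y - A = ((D - A) + (E - A)) - (y - A) := by
      simp only [hσdef]; abel
    simp only [hUdef] at *
    rw [hrw, cross_sub_right, cross_add_right]
    have h1 : cross e1 (D - A) = Pp + μ*Qq := hUD
    have h2 : cross e1 (E - A) = ν*Qq := hUE
    rw [h1, h2]
    linear_combination Qq * hμν
  have hVσ : ∀ y : E2, V (σ y) = (Rr - Pp) - V y := by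
    intro y
    have hrw : σ y - A = ((D - A) + (E - A)) - (y - A) := by
      simp only [hσdef]; abel
    simp only [hVdef] at *
    rw [hrw, cross_sub_right, cross_add_right]
    rw [hVD, hVE]
    linear_combination Rr * hμν
  have hLσ : ∀ y : E2, Lf (σ y) = - Lf y := by
    intro y
    simp only [hLfdef]
    rw [hUσ y, hVσ y]
    linear_combination (Pp*(Qq+Rr))*hμν
  have hPentRSlab : pentR ⊆ Slab := by
    rintro _ ⟨y, hy, rfl⟩
    have h := hPentSlab hy
    simp only [hSlabdef, Set.mem_setOf_eq] at h ⊢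
    rw [hUσ y, hVσ y]
    exact inhex_sigma h
  have hPentRL : pentR ⊆ {y : E2 | Lf y ≤ 0} := by
    rintro _ ⟨y, hy, rfl⟩
    have h := hPentL hy
    simp only [Set.mem_setOf_eq] at h ⊢
    rw [hLσ y]; linarith only [h]
  -- lattice
  set t1 : E2 := e2 + e3 with ht1def
  set t2 : E2 := e3 - e1 with ht2def
  set latt : ℤ → ℤ → E2 := fun m n => (m:ℝ) • t1 + (n:ℝ) • t2 with hlattdef
  have hc11 : cross e1 t1 = Pp + Qq := by
    rw [ht1def, cross_add_right, hPpdef, hQqdef]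
  have hc12 : cross e1 t2 = Qq := by
    rw [ht2def, cross_sub_right, Type1Tiling.cross_self, hQqdef]; ring
  have hc21 : cross e2 t1 = Rr := by
    rw [ht1def, cross_add_right, Type1Tiling.cross_self, hRrdef]; ring
  have hc22 : cross e2 t2 = Rr + Pp := by
    rw [ht2def, cross_sub_right, hce2e1, hRrdef]; ring
  have hUshift : ∀ (x : E2) (m n : ℤ),
      U (x - latt m n) = U x - ((m:ℝ)*(Pp+Qq) + (n:ℝ)*Qq) := by
    intro x m n
    simp only [hUdef, hlattdef]
    have hrw : x - ((m:ℝ) • t1 + (n:ℝ) • t2) - A = (x - A) - ((m:ℝ) • t1 + (n:ℝ) • t2) := by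
      abel
    rw [hrw, cross_sub_right, cross_add_right, cross_smul_right, cross_smul_right, hc11, hc12]
  have hVshift : ∀ (x : E2) (m n : ℤ),
      V (x - latt m n) = V x - ((m:ℝ)*Rr + (n:ℝ)*(Rr+Pp)) := by
    intro x m n
    simp only [hVdef, hlattdef]
    have hrw : x - ((m:ℝ) • t1 + (n:ℝ) • t2) - A = (x - A) - ((m:ℝ) • t1 + (n:ℝ) • t2) := by
      abel
    rw [hrw, cross_sub_right, cross_add_right, cross_smul_right, cross_smul_right, hc21, hc22]
  -- membership of hexagon points with nonnegative functional in the pentagon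
  have hkeymem : ∀ y : E2, InHex Pp Qq Rr (U y) (V y) →
      Pp*(U y + V y) ≤ ν*Pp*(Qq+Rr) + (μ-ν)*(Rr*(U y) - Qq*(V y)) → y ∈ P.region := by
    intro y hy hell
    obtain ⟨lA, lB, lC, lD, lE, h0A, h0B, h0C, h0D, h0E, hsum, hu, hv⟩ :=
      hex_to_pentagon hPp hQq hRr hμ hν hμν hy hell
    set W : E2 := lA•A + lB•B + lC•C + lD•D + lE•E with hWdef
    have hWA : W - A = lA•(A-A) + lB•(B-A) + lC•(C-A) + lD•(D-A) + lE•(E-A) := by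
      apply e2_ext
      · simp only [hWdef, e2_add_apply, e2_smul_apply, e2_sub_apply]
        linear_combination (A 0) * hsum
      · simp only [hWdef, e2_add_apply, e2_smul_apply, e2_sub_apply]
        linear_combination (A 1) * hsum
    rw [sub_self, smul_zero, zero_add, hdB, hdC, hdD, hdE] at hWA
    have hXW : cross e1 (W - A) = Pp*lC + (Pp+μ*Qq)*lD + ν*Qq*lE := by
      rw [hWA]
      simp only [cross_add_right, cross_smul_right, Type1Tiling.cross_self]
      rw [hPpdef, hQqdef]; ring
    have hYW : cross e2 (W - A) = -Pp*lB + (-Pp)*lC + (-Pp+μ*Rr)*lD + ν*Rr*lE := by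
      rw [hWA]
      simp only [cross_add_right, cross_smul_right, Type1Tiling.cross_self]
      rw [hce2e1, hRrdef]; ring
    have hUy : cross e1 (y - A) = cross e1 (W - A) := by
      rw [hXW]
      simp only [hUdef] at hu
      exact hu
    have hVy : cross e2 (y - A) = cross e2 (W - A) := by
      rw [hYW]
      simp only [hVdef] at hv
      rw [hv]; ring
    have hyW : y = W := by
      have h12 : cross e1 e2 ≠ 0 := by rw [← hPpdef]; exact hPp.ne'
      have := eq_of_cross_eq h12 hUy hVy
      exact sub_left_inj.mp this
    rw [hyW]
    have hw0 : ∀ i ∈ (Finset.univ : Finset (Fin 5)), 0 ≤ (![lA,lB,lC,lD,lE]) i := by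
      intro i _; fin_cases i <;> simpa
    have hsum' : ∑ i, (![lA,lB,lC,lD,lE]) i = 1 := by
      rw [Fin.sum_univ_five]
      simpa using hsum
    have hcm : (Finset.univ : Finset (Fin 5)).centerMass ![lA,lB,lC,lD,lE] P.v = W := by
      rw [Finset.centerMass_eq_of_sum_1 _ _ hsum', Fin.sum_univ_five]
      simp only [Matrix.cons_val_zero, Matrix.cons_val_one, Matrix.head_cons,
        Matrix.cons_val_two, Matrix.tail_cons, Matrix.cons_val_three, Matrix.cons_val_four]
      rw [hWdef, hA, hBdef, hCdef, hDdef, hEdef]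
    rw [ConvexPentagon.region, ← hcm]
    exact Finset.centerMass_mem_convexHull _ hw0 (by rw [hsum']; norm_num)
      (fun i _ => Set.mem_range_self i)
  have hσinv : ∀ y : E2, σ (σ y) = y := by
    intro y; simp only [hσdef]; abel
  -- nonvanishing of functional vectors
  have he1ne : e1 ≠ 0 := by
    intro h
    rw [hPpdef, h, cross_zero_left] at hPp
    exact lt_irrefl _ hPp
  have he2ne : e2 ≠ 0 := by
    intro h
    rw [hRrdef, h, cross_zero_left] at hRr
    exact lt_irrefl _ hRr
  have hUlin : ∀ y : E2, U y = cross e1 y - cross e1 A := by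
    intro y; simp only [hUdef]; rw [cross_sub_right]
  have hVlin : ∀ y : E2, V y = cross e2 y - cross e2 A := by
    intro y; simp only [hVdef]; rw [cross_sub_right]
  set W3 : E2 := Rr•e1 - Qq•e2 with hW3def
  have hW3y : ∀ y : E2, cross W3 y = Rr*(cross e1 y) - Qq*(cross e2 y) := by
    intro y; rw [hW3def, cross_sub_left, cross_smul_left, cross_smul_left]
  have hW3ne : W3 ≠ 0 := by
    intro h
    have h2 : cross W3 e2 = Rr * Pp := by
      rw [hW3y, ← hPpdef, Type1Tiling.cross_self]; ring
    rw [h, cross_zero_left] at h2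
    linarith only [h2, mul_pos hRr hPp]
  -- strict slab conditions in the interior
  have hstrictSlab : ∀ y ∈ interior Slab, InHexO Pp Qq Rr (U y) (V y) := by
    intro y hy
    refine ⟨?_, ?_, ?_, ?_, ?_, ?_⟩
    · have h := interior_cross_lt (neg_ne_zero.mpr he1ne) (r := -(cross e1 A))
        (fun z hz => by
          rw [cross_neg_left]
          have h1 : (0:ℝ) ≤ U z := hz.1
          rw [hUlin z] at h1; linarith only [h1]) hy
      rw [cross_neg_left] at h
      rw [hUlin]; linarith only [h]
    · have h := interior_cross_lt he1ne (r := Pp + Qq + cross e1 A)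
        (fun z hz => by
          have h1 : U z ≤ Pp + Qq := hz.2.1
          rw [hUlin z] at h1; linarith only [h1]) hy
      rw [hUlin]; linarith only [h]
    · have h := interior_cross_lt (neg_ne_zero.mpr he2ne) (r := Pp - cross e2 A)
        (fun z hz => by
          rw [cross_neg_left]
          have h1 : -Pp ≤ V z := hz.2.2.1
          rw [hVlin z] at h1; linarith only [h1]) hy
      rw [cross_neg_left] at h
      rw [hVlin]; linarith only [h]
    · have h := interior_cross_lt he2ne (r := Rr + cross e2 A)
        (fun z hz => by
          have h1 : V z ≤ Rr := hz.2.2.2.1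
          rw [hVlin z] at h1; linarith only [h1]) hy
      rw [hVlin]; linarith only [h]
    · have h := interior_cross_lt (neg_ne_zero.mpr hW3ne)
        (r := -(Rr*(cross e1 A) - Qq*(cross e2 A)))
        (fun z hz => by
          rw [cross_neg_left, hW3y]
          have h1 : (0:ℝ) ≤ Rr*(U z) - Qq*(V z) := hz.2.2.2.2.1
          rw [hUlin z, hVlin z] at h1; linarith only [h1]) hy
      rw [cross_neg_left, hW3y] at h
      rw [hUlin, hVlin]; linarith only [h]
    · have h := interior_cross_lt hW3ne
        (r := Pp*(Qq+Rr) + (Rr*(cross e1 A) - Qq*(cross e2 A)))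
        (fun z hz => by
          rw [hW3y]
          have h1 : Rr*(U z) - Qq*(V z) ≤ Pp*(Qq+Rr) := hz.2.2.2.2.2
          rw [hUlin z, hVlin z] at h1; linarith only [h1]) hy
      rw [hW3y] at h
      rw [hUlin, hVlin]; linarith only [h]
  -- strict separation in the interiors
  set WL : E2 := (-Pp + (μ-ν)*Rr)•e1 + (-Pp - (μ-ν)*Qq)•e2 with hWLdef
  have hWLy : ∀ y : E2,
      cross WL y = (-Pp + (μ-ν)*Rr)*(cross e1 y) + (-Pp - (μ-ν)*Qq)*(cross e2 y) := by
    intro y; rw [hWLdef, cross_add_left, cross_smul_left, cross_smul_left]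
  have hLlin : ∀ y : E2, Lf y = cross WL y +
      (ν*Pp*(Qq+Rr) - (-Pp + (μ-ν)*Rr)*(cross e1 A) - (-Pp - (μ-ν)*Qq)*(cross e2 A)) := by
    intro y
    simp only [hLfdef]
    rw [hWLy, hUlin, hVlin]; ring
  have hWLne : WL ≠ 0 := by
    intro h
    have h2 : cross WL e2 = (-Pp + (μ-ν)*Rr)*Pp := by
      rw [hWLy, ← hPpdef, Type1Tiling.cross_self]; ring
    have h3 : cross e1 WL = (-Pp - (μ-ν)*Qq)*Pp := by
      rw [hWLdef, cross_add_right, cross_smul_right, cross_smul_right, Type1Tiling.cross_self, ← hPpdef]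
      ring
    rw [h, cross_zero_left] at h2
    rw [h, cross_zero_right] at h3
    rcases mul_eq_zero.mp h2.symm with h4 | h4
    · rcases mul_eq_zero.mp h3.symm with h5 | h5
      · exact wl_contra (μ:=μ) (ν:=ν) hPp hQq hRr (by linarith only [h4]) (by linarith only [h5])
      · exact hPp.ne' h5
    · exact hPp.ne' h4
  set cL : ℝ :=
    ν*Pp*(Qq+Rr) - (-Pp + (μ-ν)*Rr)*(cross e1 A) - (-Pp - (μ-ν)*Qq)*(cross e2 A) with hcL
  have hLpos : ∀ y ∈ interior P.region, 0 < Lf y := by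
    intro y hy
    have h := interior_cross_lt (neg_ne_zero.mpr hWLne) (r := cL)
      (fun z hz => by
        rw [cross_neg_left]
        have h1 : (0:ℝ) ≤ Lf z := hPentL hz
        rw [hLlin z] at h1; linarith only [h1]) hy
    rw [cross_neg_left] at h
    rw [hLlin y]; linarith only [h]
  have hLneg : ∀ y ∈ interior pentR, Lf y < 0 := by
    intro y hy
    have h := interior_cross_lt hWLne (r := -cL)
      (fun z hz => by
        have h1 : Lf z ≤ 0 := hPentRL hz
        rw [hLlin z] at h1; linarith only [h1]) hy
    rw [hLlin y]; linarith only [h]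
  -- the tiling
  set S : Set (Set E2) :=
    {T | ∃ m n : ℤ, T = (fun x => x + latt m n) '' P.region ∨
         T = (fun x => x + latt m n) '' pentR} with hSdef
  have hMM : midpoint ℝ D E + midpoint ℝ D E = D + E := midpoint_add_self ℝ D E
  have hInt : ∀ (m n : ℤ) (X : Set E2), ∀ x : E2,
      x ∈ interior ((fun z => z + latt m n) '' X) → (x - latt m n) ∈ interior X := by
    intro m n X x hx
    have hh : interior ((fun z => z + latt m n) '' X)
        = (fun z => z + latt m n) '' interior X := by
      exact ((Homeomorph.addRight (latt m n)).image_interior X).symm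
    rw [hh] at hx
    obtain ⟨z, hz, hzx⟩ := hx
    have : x - latt m n = z := by rw [← hzx]; exact add_sub_cancel_right z (latt m n)
    rw [this]; exact hz
  refine ⟨S, ?_, ?_, ?_, ?_⟩
  · -- all tiles are isometric copies
    rintro T ⟨m, n, hT | hT⟩
    · refine ⟨IsometryEquiv.addRight (latt m n), ?_⟩
      rw [hT]; rfl
    · refine ⟨((AffineIsometryEquiv.pointReflection ℝ (midpoint ℝ D E)).toIsometryEquiv).trans
        (IsometryEquiv.addRight (latt m n)), ?_⟩
      rw [hT, hpentR, Set.image_image]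
      apply Set.image_congr
      intro y _
      show σ y + latt m n = _
      have hpr : (AffineIsometryEquiv.pointReflection ℝ (midpoint ℝ D E)) y = σ y := by
        rw [AffineIsometryEquiv.pointReflection_apply]
        show (midpoint ℝ D E - y) + midpoint ℝ D E = σ y
        simp only [hσdef]
        rw [← hMM]; abel
      show σ y + latt m n = (IsometryEquiv.addRight (latt m n))
        ((AffineIsometryEquiv.pointReflection ℝ (midpoint ℝ D E)).toIsometryEquiv y)
      rw [AffineIsometryEquiv.coe_toIsometryEquiv] at *
      rw [hpr]
      rfl
  · -- union is everything
    ext x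
    simp only [Set.mem_sUnion, Set.mem_univ, iff_true]
    obtain ⟨m, n, hmn⟩ := lattice_cover hPp hQq hRr (U x) (V x)
    have hy : InHex Pp Qq Rr (U (x - latt m n)) (V (x - latt m n)) := by
      rw [hUshift, hVshift]; exact hmn
    set y := x - latt m n with hydef
    have hmem : y ∈ P.region ∨ y ∈ pentR := by
      rcases le_or_gt (Pp*(U y + V y)) (ν*Pp*(Qq+Rr) + (μ-ν)*(Rr*(U y) - Qq*(V y)))
        with hL | hL
      · exact Or.inl (hkeymem y hy hL)
      · right
        have hyσ : InHex Pp Qq Rr (U (σ y)) (V (σ y)) := by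
          rw [hUσ y, hVσ y]
          exact inhex_sigma hy
        have hellσ : Pp*(U (σ y) + V (σ y)) ≤
            ν*Pp*(Qq+Rr) + (μ-ν)*(Rr*(U (σ y)) - Qq*(V (σ y))) := by
          rw [hUσ y, hVσ y]
          exact ell_sigma hμν hL
        have hσy : σ y ∈ P.region := hkeymem (σ y) hyσ hellσ
        rw [hpentR]
        exact ⟨σ y, hσy, hσinv y⟩
    rcases hmem with hmem | hmem
    · refine ⟨(fun z => z + latt m n) '' P.region, ⟨m, n, Or.inl rfl⟩, ?_⟩
      exact ⟨y, hmem, by rw [hydef]; exact sub_add_cancel x (latt m n)⟩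
    · refine ⟨(fun z => z + latt m n) '' pentR, ⟨m, n, Or.inr rfl⟩, ?_⟩
      exact ⟨y, hmem, by rw [hydef]; exact sub_add_cancel x (latt m n)⟩
  · -- interiors are disjoint
    rintro T₁ ⟨m1, n1, hT1⟩ T₂ ⟨m2, n2, hT2⟩ hne
    rw [Set.disjoint_left]
    intro x hx1 hx2
    -- both memberships give strict slab conditions after shifting
    have hget : ∀ (m n : ℤ) (X : Set E2), X ⊆ Slab →
        ∀ x : E2, x ∈ interior ((fun z => z + latt m n) '' X) →
        InHexO Pp Qq Rr (U (x - latt m n)) (V (x - latt m n)) ∧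
          (x - latt m n) ∈ interior X := by
      intro m n X hXS x hx
      have h1 := hInt m n X x hx
      exact ⟨hstrictSlab _ (interior_mono hXS h1), h1⟩
    have key : m1 = m2 ∧ n1 = n2 := by
      have hO1 : InHexO Pp Qq Rr (U (x - latt m1 n1)) (V (x - latt m1 n1)) := by
        rcases hT1 with h | h
        · exact (hget m1 n1 _ hPentSlab x (h ▸ hx1)).1
        · exact (hget m1 n1 _ hPentRSlab x (h ▸ hx1)).1
      have hO2 : InHexO Pp Qq Rr (U (x - latt m2 n2)) (V (x - latt m2 n2)) := by
        rcases hT2 with h | h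
        · exact (hget m2 n2 _ hPentSlab x (h ▸ hx2)).1
        · exact (hget m2 n2 _ hPentRSlab x (h ▸ hx2)).1
      have hUeq : U (x - latt m2 n2) = U (x - latt m1 n1)
          - (((m2 - m1 : ℤ):ℝ)*(Pp+Qq) + ((n2 - n1 : ℤ):ℝ)*Qq) := by
        rw [hUshift, hUshift]; push_cast; ring
      have hVeq : V (x - latt m2 n2) = V (x - latt m1 n1)
          - (((m2 - m1 : ℤ):ℝ)*Rr + ((n2 - n1 : ℤ):ℝ)*(Rr+Pp)) := by
        rw [hVshift, hVshift]; push_cast; ring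
      rw [hUeq, hVeq] at hO2
      obtain ⟨hm, hn⟩ := lattice_disjoint hPp hQq hRr hO1 hO2
      constructor
      · omega
      · omega
    obtain ⟨hm, hn⟩ := key
    subst hm; subst hn
    rcases hT1 with h1 | h1 <;> rcases hT2 with h2 | h2
    · exact hne (h1.trans h2.symm)
    · -- pentagon vs reflected pentagon at the same position
      have ha := hInt m1 n1 _ x (h1 ▸ hx1)
      have hb := hInt m1 n1 _ x (h2 ▸ hx2)
      have hp := hLpos _ ha
      have hq := hLneg _ hb
      linarith only [hp, hq]
    · have ha := hInt m1 n1 _ x (h1 ▸ hx1)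
      have hb := hInt m1 n1 _ x (h2 ▸ hx2)
      have hp := hLneg _ ha
      have hq := hLpos _ hb
      linarith only [hp, hq]
    · exact hne (h1.trans h2.symm)
  · -- periodicity
    refine ⟨t1, t2, ?_, ?_, ?_⟩
    · rw [linearIndependent_fin2]
      constructor
      · intro h
        simp only [Matrix.cons_val_one, Matrix.head_cons, Matrix.cons_val_zero] at h
        rw [h, cross_zero_right] at hc12
        exact hQq.ne hc12
      · intro a h
        simp only [Matrix.cons_val_one, Matrix.head_cons, Matrix.cons_val_zero] at h
        have h1 : cross t1 t2 = Rr + Pp + Qq := by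
          rw [ht1def, ht2def, cross_add_left, cross_sub_right, cross_sub_right,
            Type1Tiling.cross_self, hce2e1, hce3e1, hRrdef]
          ring
        rw [← h, cross_smul_left, Type1Tiling.cross_self, mul_zero] at h1
        linarith only [h1, hPp, hQq, hRr]
    · rintro T ⟨m, n, hT | hT⟩
      · refine ⟨m+1, n, Or.inl ?_⟩
        rw [hT, Set.image_image]
        apply Set.image_congr
        intro y _
        simp only [hlattdef]
        push_cast
        rw [add_smul, one_smul]
        abel
      · refine ⟨m+1, n, Or.inr ?_⟩
        rw [hT, Set.image_image]
        apply Set.image_congr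
        intro y _
        simp only [hlattdef]
        push_cast
        rw [add_smul, one_smul]
        abel
    · rintro T ⟨m, n, hT | hT⟩
      · refine ⟨m, n+1, Or.inl ?_⟩
        rw [hT, Set.image_image]
        apply Set.image_congr
        intro y _
        simp only [hlattdef]
        push_cast
        rw [add_smul, one_smul]
        abel
      · refine ⟨m, n+1, Or.inr ?_⟩
        rw [hT, Set.image_image]
        apply Set.image_congr
        intro y _
        simp only [hlattdef]
        push_cast
        rw [add_smul, one_smul]
        abel
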